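/- Bárány–Füredi theorem (ellipsoid form): there is an absolute constant C > 0 such that if E is an ellipsoid in R^m, s ≥ m+1, and w_1, …, w_s ∈ E, then (|conv(w_1,…,w_s)| / |E|)^{1/m} ≤ C √(log(1 + s/m)/m). -/

import Mathlib

open MeasureTheory Metric Set

noncomputable section

set_option maxHeartbeats 1000000

open scoped RealInnerProductSpace ENNReal Pointwise

/-- Euclidean space ℝ^m. -/
abbrev En (m : ℕ) := EuclideanSpace ℝ (Fin m)

section Maurey

variable {E : Type*} [NormedAddCommGroup E] [InnerProductSpace ℝ E]

private def bfCons {s k : ℕ} (a : Fin s) (g : Fin k → Fin s) : Fin (k + 1) → Fin s :=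
  Fin.cons a g

private lemma bf_sum_split {s k : ℕ} (F : (Fin (k + 1) → Fin s) → ℝ) :
    ∑ f : Fin (k + 1) → Fin s, F f = ∑ a : Fin s, ∑ g : Fin k → Fin s, F (bfCons a g) := by
  calc ∑ f : Fin (k + 1) → Fin s, F f
      = ∑ p : Fin s × (Fin k → Fin s), F (bfCons p.1 p.2) :=
        (Fintype.sum_equiv (Fin.consEquiv fun _ : Fin (k + 1) => Fin s)
          (fun p => F (bfCons p.1 p.2)) F (fun p => rfl)).symm
    _ = ∑ a : Fin s, ∑ g : Fin k → Fin s, F (bfCons a g) := Fintype.sum_prod_type _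

private lemma bf_comp_cons_sum {s k : ℕ} (F : Fin s → E) (a : Fin s) (g : Fin k → Fin s) :
    ∑ j : Fin (k + 1), F (bfCons a g j) = F a + ∑ j : Fin k, F (g j) := by
  have : (fun j => F (bfCons a g j)) = Fin.cons (F a) (F ∘ g) := Fin.comp_cons F a g
  rw [this, Fin.sum_cons]
  rfl

private lemma bf_comp_cons_prod {s k : ℕ} (F : Fin s → ℝ) (a : Fin s) (g : Fin k → Fin s) :
    ∏ j : Fin (k + 1), F (bfCons a g j) = F a * ∏ j : Fin k, F (g j) := by
  have : (fun j => F (bfCons a g j)) = Fin.cons (F a) (F ∘ g) := Fin.comp_cons F a g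
  rw [this, Fin.prod_cons]
  rfl

private lemma bf_sum_weights {s : ℕ} (lam : Fin s → ℝ) (h1 : ∑ i, lam i = 1) :
    ∀ k : ℕ, ∑ f : Fin k → Fin s, ∏ j, lam (f j) = 1
  | 0 => by simp
  | (k + 1) => by
    rw [bf_sum_split (fun f => ∏ j, lam (f j))]
    calc ∑ a : Fin s, ∑ g : Fin k → Fin s, ∏ j, lam (bfCons a g j)
        = ∑ a : Fin s, ∑ g : Fin k → Fin s, lam a * ∏ j, lam (g j) := by
          refine Finset.sum_congr rfl fun a _ => Finset.sum_congr rfl fun g _ => ?_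
          exact bf_comp_cons_prod lam a g
      _ = 1 := by
          simp only [← Finset.mul_sum, bf_sum_weights lam h1 k, mul_one, h1]

private lemma bf_maurey_sum {s : ℕ} (u : Fin s → E) (lam : Fin s → ℝ) (x : E)
    (h0 : ∀ i, 0 ≤ lam i) (h1 : ∑ i, lam i = 1) (hx : ∑ i, lam i • u i = x)
    (hu : ∀ i, ‖u i‖ ≤ 1) :
    ∀ k : ℕ, ∑ f : Fin k → Fin s, (∏ j, lam (f j)) * ‖∑ j, (u (f j) - x)‖ ^ 2 ≤ k
  | 0 => by simp
  | (k + 1) => by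
    have key : ∑ i, lam i • (u i - x) = 0 := by
      simp only [smul_sub]
      rw [Finset.sum_sub_distrib, hx, ← Finset.sum_smul, h1, one_smul, sub_self]
    have hvar : ∑ i, lam i * ‖u i - x‖ ^ 2 ≤ 1 := by
      have expand : ∀ i : Fin s, lam i * ‖u i - x‖ ^ 2
          = lam i * ‖u i‖ ^ 2 - 2 * (lam i * ⟪u i, x⟫) + lam i * ‖x‖ ^ 2 := by
        intro i
        rw [norm_sub_sq_real]
        ring
      rw [Finset.sum_congr rfl fun i _ => expand i]
      rw [Finset.sum_add_distrib, Finset.sum_sub_distrib, ← Finset.mul_sum (a := 2),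
        ← Finset.sum_mul, h1, one_mul]
      have hix : ∑ i, lam i * ⟪u i, x⟫ = ‖x‖ ^ 2 := by
        have : ∑ i, lam i * ⟪u i, x⟫ = ⟪∑ i, lam i • u i, x⟫ := by
          rw [sum_inner]
          exact Finset.sum_congr rfl fun i _ => (real_inner_smul_left _ _ _).symm
        rw [this, hx, real_inner_self_eq_norm_sq]
      rw [hix]
      have h2 : ∑ i, lam i * ‖u i‖ ^ 2 ≤ 1 := by
        calc ∑ i, lam i * ‖u i‖ ^ 2 ≤ ∑ i, lam i * 1 := by
              refine Finset.sum_le_sum fun i _ => ?_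
              have h := hu i
              have hn : (0:ℝ) ≤ ‖u i‖ := norm_nonneg _
              exact mul_le_mul_of_nonneg_left (by nlinarith) (h0 i)
          _ = 1 := by rw [← Finset.sum_mul, h1, one_mul]
      nlinarith [sq_nonneg ‖x‖]
    rw [bf_sum_split (fun f => (∏ j, lam (f j)) * ‖∑ j, (u (f j) - x)‖ ^ 2)]
    have step : ∀ p : Fin s × (Fin k → Fin s),
        (∏ j, lam (bfCons p.1 p.2 j)) * ‖∑ j, (u (bfCons p.1 p.2 j) - x)‖ ^ 2
        = (lam p.1 * ∏ j, lam (p.2 j)) * ‖(u p.1 - x) + ∑ j, (u (p.2 j) - x)‖ ^ 2 := by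
      rintro ⟨a, g⟩
      rw [bf_comp_cons_prod lam a g, bf_comp_cons_sum (fun i => u i - x) a g]
    calc ∑ a : Fin s, ∑ g : Fin k → Fin s,
          (∏ j, lam (bfCons a g j)) * ‖∑ j, (u (bfCons a g j) - x)‖ ^ 2
        = ∑ g : Fin k → Fin s, ∑ a : Fin s,
          (lam a * ∏ j, lam (g j)) * ‖(u a - x) + ∑ j, (u (g j) - x)‖ ^ 2 := by
          rw [Finset.sum_comm]
          exact Finset.sum_congr rfl fun g _ => Finset.sum_congr rfl fun a _ => step ⟨a, g⟩
      _ = ∑ g : Fin k → Fin s, (∏ j, lam (g j)) *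
            (∑ a : Fin s, lam a * ‖(u a - x) + ∑ j, (u (g j) - x)‖ ^ 2) := by
          refine Finset.sum_congr rfl fun g _ => ?_
          rw [Finset.mul_sum]
          exact Finset.sum_congr rfl fun a _ => by ring
      _ ≤ ∑ g : Fin k → Fin s, (∏ j, lam (g j)) *
            (1 + ‖∑ j, (u (g j) - x)‖ ^ 2) := by
          refine Finset.sum_le_sum fun g _ => ?_
          refine mul_le_mul_of_nonneg_left ?_ (Finset.prod_nonneg fun j _ => h0 (g j))
          set w := ∑ j, (u (g j) - x) with hw
          have inner_zero : ∑ a, lam a * ⟪u a - x, w⟫ = 0 := by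
            have : ∑ a, lam a * ⟪u a - x, w⟫ = ⟪∑ a, lam a • (u a - x), w⟫ := by
              rw [sum_inner]
              exact Finset.sum_congr rfl fun a _ => (real_inner_smul_left _ _ _).symm
            rw [this, key, inner_zero_left]
          calc ∑ a : Fin s, lam a * ‖(u a - x) + w‖ ^ 2
              = ∑ a : Fin s, (lam a * ‖u a - x‖ ^ 2 + 2 * (lam a * ⟪u a - x, w⟫)
                  + lam a * ‖w‖ ^ 2) := by
                refine Finset.sum_congr rfl fun a _ => ?_
                rw [norm_add_sq_real]
                ring
            _ = (∑ a, lam a * ‖u a - x‖ ^ 2) + 2 * (∑ a, lam a * ⟪u a - x, w⟫)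
                  + ‖w‖ ^ 2 := by
                rw [Finset.sum_add_distrib, Finset.sum_add_distrib, ← Finset.mul_sum,
                  ← Finset.sum_mul, h1, one_mul]
            _ ≤ 1 + ‖w‖ ^ 2 := by rw [inner_zero]; nlinarith
      _ = (∑ g : Fin k → Fin s, ∏ j, lam (g j))
            + ∑ g : Fin k → Fin s, (∏ j, lam (g j)) * ‖∑ j, (u (g j) - x)‖ ^ 2 := by
          rw [← Finset.sum_add_distrib]
          exact Finset.sum_congr rfl fun g _ => by ring
      _ ≤ 1 + k := by
          rw [bf_sum_weights lam h1 k]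
          have := bf_maurey_sum u lam x h0 h1 hx hu k
          linarith
      _ = ((k : ℝ) + 1) := by ring
      _ = ((k + 1 : ℕ) : ℝ) := by push_cast; ring

end Maurey

section Extract

variable {E : Type*} [NormedAddCommGroup E] [InnerProductSpace ℝ E]

private lemma bf_exists_good_f {s : ℕ} (u : Fin s → E) (x : E)
    (hx : x ∈ convexHull ℝ (Set.range u)) (hu : ∀ i, ‖u i‖ ≤ 1) (k : ℕ) (hk : 1 ≤ k) :
    ∃ f : Fin k → Fin s, ‖x - (k : ℝ)⁻¹ • ∑ j, u (f j)‖ ≤ (Real.sqrt k)⁻¹ := by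
  -- extract convex weights
  rw [convexHull_range_eq_exists_affineCombination] at hx
  obtain ⟨t, w, hw0, hw1, hwx⟩ := hx
  set lam : Fin s → ℝ := fun i => if i ∈ t then w i else 0 with hlam
  have h0 : ∀ i, 0 ≤ lam i := by
    intro i
    by_cases h : i ∈ t <;> simp [hlam, h, hw0 i]
  have h1 : ∑ i, lam i = 1 := by
    rw [← hw1]
    rw [← Finset.sum_subset (Finset.subset_univ t) (fun i _ hi => by simp [hlam, hi])]
    exact Finset.sum_congr rfl fun i hi => by simp [hlam, hi]
  have hxx : ∑ i, lam i • u i = x := by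
    rw [← hwx, Finset.affineCombination_eq_linear_combination t u w hw1]
    rw [← Finset.sum_subset (Finset.subset_univ t) (fun i _ hi => by simp [hlam, hi])]
    exact Finset.sum_congr rfl fun i hi => by simp [hlam, hi]
  have hsum := bf_maurey_sum u lam x h0 h1 hxx hu k
  -- extract a good f
  have hex : ∃ f : Fin k → Fin s, ‖∑ j, (u (f j) - x)‖ ^ 2 ≤ (k : ℝ) := by
    by_contra hcon
    push_neg at hcon
    have hW := bf_sum_weights lam h1 k
    obtain ⟨f₀, -, hf₀⟩ := Finset.exists_ne_zero_of_sum_ne_zero (by rw [hW]; norm_num :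
      ∑ f : Fin k → Fin s, ∏ j, lam (f j) ≠ 0)
    have hf₀pos : 0 < ∏ j, lam (f₀ j) :=
      lt_of_le_of_ne (Finset.prod_nonneg fun j _ => h0 (f₀ j)) (Ne.symm hf₀)
    have hlt : (k : ℝ) < ∑ f : Fin k → Fin s, (∏ j, lam (f j)) * ‖∑ j, (u (f j) - x)‖ ^ 2 := by
      have : ∑ f : Fin k → Fin s, (∏ j, lam (f j)) * (k : ℝ)
          < ∑ f : Fin k → Fin s, (∏ j, lam (f j)) * ‖∑ j, (u (f j) - x)‖ ^ 2 := by
        refine Finset.sum_lt_sum (fun f _ => ?_) ⟨f₀, Finset.mem_univ _, ?_⟩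
        · exact mul_le_mul_of_nonneg_left (hcon f).le
            (Finset.prod_nonneg fun j _ => h0 (f j))
        · exact (mul_lt_mul_iff_right₀ hf₀pos).2 (hcon f₀)
      calc (k : ℝ) = ∑ f : Fin k → Fin s, (∏ j, lam (f j)) * (k : ℝ) := by
            rw [← Finset.sum_mul, hW, one_mul]
        _ < _ := this
    linarith
  obtain ⟨f, hf⟩ := hex
  refine ⟨f, ?_⟩
  have hkpos : (0 : ℝ) < (k : ℝ) := by exact_mod_cast hk
  have hsplit : ∑ j : Fin k, (u (f j) - x) = (∑ j, u (f j)) - (k : ℝ) • x := by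
    rw [Finset.sum_sub_distrib, Finset.sum_const, Finset.card_univ, Fintype.card_fin,
      Nat.cast_smul_eq_nsmul]
  have hnorm : ‖(∑ j, u (f j)) - (k : ℝ) • x‖ ≤ Real.sqrt k := by
    rw [← hsplit]
    have := Real.sqrt_le_sqrt hf
    rwa [Real.sqrt_sq (norm_nonneg _)] at this
  have heq : x - (k : ℝ)⁻¹ • ∑ j, u (f j)
      = (k : ℝ)⁻¹ • ((k : ℝ) • x - ∑ j, u (f j)) := by
    rw [smul_sub, smul_smul, inv_mul_cancel₀ hkpos.ne', one_smul]
  rw [heq, norm_smul]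
  rw [← norm_neg ((k : ℝ) • x - ∑ j, u (f j)), neg_sub]
  have h2 : ‖(k:ℝ)⁻¹‖ = (k:ℝ)⁻¹ := by
    rw [Real.norm_eq_abs, abs_of_pos (by positivity)]
  rw [h2]
  have hsq : Real.sqrt k * Real.sqrt k = (k : ℝ) := Real.mul_self_sqrt hkpos.le
  have hsqpos : 0 < Real.sqrt k := Real.sqrt_pos.2 hkpos
  calc (k:ℝ)⁻¹ * ‖(∑ j, u (f j)) - (k : ℝ) • x‖ ≤ (k:ℝ)⁻¹ * Real.sqrt k := by
        exact mul_le_mul_of_nonneg_left hnorm (by positivity)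
    _ = (Real.sqrt k)⁻¹ := by
        rw [← hsq]
        field_simp
        rw [Real.sqrt_sq hsqpos.le]
  done

end Extract

section BallCase

private lemma bf_cover {m s k : ℕ} (u : Fin s → En m) (hu : ∀ i, ‖u i‖ ≤ 1) (hk : 1 ≤ k) :
    convexHull ℝ (Set.range u) ⊆
      ⋃ σ : Sym (Fin s) k,
        closedBall ((k : ℝ)⁻¹ • ((σ.1.map u).sum)) ((Real.sqrt k)⁻¹) := by
  intro x hx
  obtain ⟨f, hf⟩ := bf_exists_good_f u x hx hu k hk
  refine Set.mem_iUnion.2 ⟨⟨Multiset.map f Finset.univ.val, by simp⟩, ?_⟩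
  have hmap : ((Multiset.map f Finset.univ.val).map u).sum = ∑ j, u (f j) := by
    rw [Multiset.map_map, Finset.sum_eq_multiset_sum]
    rfl
  rw [mem_closedBall, dist_eq_norm, hmap]
  exact hf

private lemma bf_ratio_le {m s k : ℕ} (hm : 1 ≤ m) (u : Fin s → En m)
    (hu : ∀ i, ‖u i‖ ≤ 1) (hk : 1 ≤ k) :
    (volume (convexHull ℝ (Set.range u))).toReal /
        (volume (closedBall (0 : En m) 1)).toReal
      ≤ (Fintype.card (Sym (Fin s) k) : ℝ) * ((Real.sqrt k)⁻¹) ^ m := by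
  set r : ℝ := (Real.sqrt k)⁻¹ with hr
  have hr0 : 0 ≤ r := by positivity
  set VB := volume (closedBall (0 : En m) 1) with hVB
  have hVBpos : 0 < VB := (measure_ball_pos volume _ one_pos).trans_le
    (measure_mono ball_subset_closedBall)
  have hVBfin : VB < ⊤ := measure_closedBall_lt_top
  have hcover := bf_cover u hu hk
  have hmeas : volume (convexHull ℝ (Set.range u))
      ≤ (Fintype.card (Sym (Fin s) k) : ℝ≥0∞) * (ENNReal.ofReal (r ^ m) * VB) := by
    calc volume (convexHull ℝ (Set.range u))
        ≤ volume (⋃ σ : Sym (Fin s) k,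
            closedBall ((k : ℝ)⁻¹ • ((σ.1.map u).sum)) r) := measure_mono hcover
      _ ≤ ∑' σ : Sym (Fin s) k,
            volume (closedBall ((k : ℝ)⁻¹ • ((σ.1.map u).sum)) r) := measure_iUnion_le _
      _ = ∑ σ : Sym (Fin s) k,
            volume (closedBall ((k : ℝ)⁻¹ • ((σ.1.map u).sum)) r) := tsum_fintype _
      _ = ∑ σ : Sym (Fin s) k, ENNReal.ofReal (r ^ m) * VB := by
            refine Finset.sum_congr rfl fun σ _ => ?_
            rw [Measure.addHaar_closedBall' volume _ hr0, finrank_euclideanSpace_fin]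
      _ = (Fintype.card (Sym (Fin s) k) : ℝ≥0∞) * (ENNReal.ofReal (r ^ m) * VB) := by
            rw [Finset.sum_const, Finset.card_univ, nsmul_eq_mul]
  have hfin : (Fintype.card (Sym (Fin s) k) : ℝ≥0∞) * (ENNReal.ofReal (r ^ m) * VB) ≠ ⊤ := by
    exact ENNReal.mul_ne_top (by simp) (ENNReal.mul_ne_top ENNReal.ofReal_ne_top hVBfin.ne)
  have htr := ENNReal.toReal_mono hfin hmeas
  rw [ENNReal.toReal_mul, ENNReal.toReal_mul, ENNReal.toReal_natCast,
    ENNReal.toReal_ofReal (by positivity)] at htr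
  rw [div_le_iff₀ (by
    exact ENNReal.toReal_pos hVBpos.ne' hVBfin.ne)]
  calc (volume (convexHull ℝ (Set.range u))).toReal
      ≤ (Fintype.card (Sym (Fin s) k) : ℝ) * (r ^ m * VB.toReal) := htr
    _ = (Fintype.card (Sym (Fin s) k) : ℝ) * r ^ m * VB.toReal := by ring

end BallCase

private lemma bf_pow_div_factorial_le_exp (k : ℕ) :
    ((k : ℝ)) ^ k / (Nat.factorial k : ℝ) ≤ Real.exp k := by
  have h := Real.sum_le_exp_of_nonneg (x := (k : ℝ)) (by positivity) (k + 1)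
  refine le_trans ?_ h
  have : ((k : ℝ)) ^ k / (Nat.factorial k : ℝ)
      = (fun i => (k : ℝ) ^ i / (Nat.factorial i : ℝ)) k := rfl
  rw [this]
  exact Finset.single_le_sum (f := fun i => (k : ℝ) ^ i / (Nat.factorial i : ℝ))
    (fun i _ => by positivity) (Finset.self_mem_range_succ k)

private lemma bf_ball_case {m s : ℕ} (hm : 1 ≤ m) (hs : m + 1 ≤ s)
    (u : Fin s → En m) (hu : ∀ i, ‖u i‖ ≤ 1) :
    ((volume (convexHull ℝ (Set.range u))).toReal /
        (volume (closedBall (0 : En m) 1)).toReal) ^ ((1:ℝ)/(m:ℝ))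
      ≤ Real.exp 12 * Real.sqrt (Real.log (1 + (s:ℝ)/(m:ℝ)) / (m:ℝ)) := by
  have hmpos : (0:ℝ) < m := by exact_mod_cast hm
  have hm1 : (1:ℝ) ≤ (m:ℝ) := by exact_mod_cast hm
  have hsm : (m:ℝ) + 1 ≤ (s:ℝ) := by exact_mod_cast hs
  have hspos : (0:ℝ) < s := by linarith
  set Q : ℝ := 1 + (s:ℝ)/(m:ℝ) with hQ
  have hsm1 : (1:ℝ) ≤ (s:ℝ)/(m:ℝ) := (one_le_div hmpos).2 (by linarith)
  have hQ2 : (2:ℝ) ≤ Q := by rw [hQ]; linarith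
  have hQpos : (0:ℝ) < Q := by linarith
  set L : ℝ := Real.log Q with hL
  have hLlog2 : Real.log 2 ≤ L := Real.log_le_log two_pos hQ2
  have hLpos : (0:ℝ) < L := lt_of_lt_of_le (Real.log_pos one_lt_two) hLlog2
  have hlog2 : (0.6931471803 : ℝ) < Real.log 2 := Real.log_two_gt_d9
  clear_value Q L
  set VB := (volume (closedBall (0 : En m) 1)).toReal with hVB
  have hVBpos : 0 < VB := ENNReal.toReal_pos
    ((measure_ball_pos volume _ one_pos).trans_le (measure_mono ball_subset_closedBall)).ne'
    measure_closedBall_lt_top.ne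
  clear_value VB
  set R := (volume (convexHull ℝ (Set.range u))).toReal / VB with hR
  clear_value R
  have hR0 : 0 ≤ R := by
    rw [hR, hVB]
    positivity
  have hsub : convexHull ℝ (Set.range u) ⊆ closedBall (0 : En m) 1 := by
    refine convexHull_min ?_ (convex_closedBall _ _)
    rintro y ⟨i, rfl⟩
    exact mem_closedBall_zero_iff.2 (hu i)
  have hR1 : R ≤ 1 := by
    rw [hR, div_le_one hVBpos, hVB]
    exact ENNReal.toReal_mono measure_closedBall_lt_top.ne (measure_mono hsub)
  have hexp1 : (1:ℝ) ≤ Real.exp 12 := by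
    rw [← Real.exp_zero]
    exact Real.exp_le_exp.2 (by norm_num)
  rcases le_or_gt (m:ℝ) L with hcase | hcase
  · -- trivial case: L ≥ m
    have h1 : R ^ ((1:ℝ)/(m:ℝ)) ≤ 1 := Real.rpow_le_one hR0 hR1 (by positivity)
    have h2 : (1:ℝ) ≤ Real.sqrt (L/(m:ℝ)) := by
      rw [show (1:ℝ) = Real.sqrt 1 from (Real.sqrt_one).symm]
      exact Real.sqrt_le_sqrt ((one_le_div hmpos).2 hcase)
    calc R ^ ((1:ℝ)/(m:ℝ)) ≤ 1 := h1
      _ ≤ Real.exp 12 * Real.sqrt (L/(m:ℝ)) := by nlinarith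
  · -- main case: L < m
    set k : ℕ := ⌈(m:ℝ)/L⌉₊ with hk
    have hmL1 : (1:ℝ) ≤ (m:ℝ)/L := (one_le_div hLpos).2 hcase.le
    have hmLpos : (0:ℝ) < (m:ℝ)/L := by linarith
    have hk_low : (m:ℝ)/L ≤ (k:ℝ) := Nat.le_ceil _
    have hk1 : 1 ≤ k := Nat.one_le_ceil_iff.2 hmLpos
    have hkpos : (0:ℝ) < (k:ℝ) := by exact_mod_cast hk1
    have hk_up : (k:ℝ) ≤ (m:ℝ)/L + 1 := (Nat.ceil_lt_add_one hmLpos.le).le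
    clear_value k
    have hkL : (k:ℝ) * L ≤ 2 * m := by
      have : (k:ℝ) ≤ 2 * ((m:ℝ)/L) := by linarith
      calc (k:ℝ) * L ≤ 2 * ((m:ℝ)/L) * L := by nlinarith
        _ = 2 * m := by field_simp
    have hk3m : (k:ℝ) ≤ 3 * m := by
      have h2 : (m:ℝ)/L ≤ 2 * m := by
        rw [div_le_iff₀ hLpos]
        nlinarith
      linarith [hm1]
    -- the covering bound
    set r : ℝ := (Real.sqrt k)⁻¹ with hr
    have hrpos : 0 < r := by
      rw [hr]
      positivity
    clear_value r
    set N : ℕ := Fintype.card (Sym (Fin s) k) with hN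
    have hRN : R ≤ (N:ℝ) * r ^ m := by
      rw [hR, hVB, hr, hN]
      exact bf_ratio_le hm u hu hk1
    have hN0 : (0:ℝ) ≤ N := by positivity
    -- bound N
    have hNchoose : (N:ℝ) ≤ ((s + k).choose k : ℝ) := by
      have h1 : N = (s + k - 1).choose k := by
        rw [hN, Sym.card_sym_eq_choose, Fintype.card_fin]
      rw [h1]
      exact_mod_cast Nat.choose_le_choose k (by omega : s + k - 1 ≤ s + k)
    clear_value N
    have hchoose_pow : (((s + k).choose k : ℕ) : ℝ) ≤ ((s:ℝ) + k) ^ k / (Nat.factorial k : ℝ) := by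
      have := Nat.choose_le_pow_div (α := ℝ) k (s + k)
      push_cast at this ⊢
      convert this using 2
    have hfact_inv : ((s:ℝ) + k) ^ k / (Nat.factorial k : ℝ)
        ≤ (((s:ℝ) + k) * Real.exp 1 / k) ^ k := by
      have hfac : (0:ℝ) < (Nat.factorial k : ℝ) := by exact_mod_cast k.factorial_pos
      have hkk : ((k : ℝ)) ^ k / (Nat.factorial k : ℝ) ≤ Real.exp k := bf_pow_div_factorial_le_exp k
      have hexpk : Real.exp (k:ℝ) = (Real.exp 1) ^ k := by
        rw [← Real.exp_one_pow]
      rw [div_pow, mul_pow]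
      rw [div_le_div_iff₀ hfac (by positivity)]
      have h1 : ((k : ℝ)) ^ k ≤ Real.exp (k:ℝ) * (Nat.factorial k : ℝ) :=
        (div_le_iff₀ hfac).1 hkk
      calc ((s:ℝ) + k) ^ k * (k:ℝ) ^ k ≤ ((s:ℝ) + k) ^ k * (Real.exp (k:ℝ) * (Nat.factorial k : ℝ)) := by
            refine mul_le_mul_of_nonneg_left h1 (by positivity)
        _ = ((s:ℝ) + k) ^ k * Real.exp 1 ^ k * (Nat.factorial k : ℝ) := by
            rw [hexpk]; ring
    have hbase : ((s:ℝ) + k) * Real.exp 1 / k ≤ Q ^ 6 := by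
      have hsk : (s:ℝ) + k ≤ 4 * s := by
        have : (m:ℝ) ≤ s := by linarith
        linarith
      have hmLk : (m:ℝ) ≤ L * k := by
        rw [← div_le_iff₀' hLpos]
        exact hk_low
      have hinvk : ((s:ℝ) + k) / k ≤ 4 * s * L / m := by
        rw [div_le_div_iff₀ hkpos hmpos]
        have t1 : ((s:ℝ) + k) * m ≤ (4 * s) * m := mul_le_mul_of_nonneg_right hsk hmpos.le
        have t2 : (4 * (s:ℝ)) * m ≤ (4 * s) * (L * k) :=
          mul_le_mul_of_nonneg_left hmLk (by positivity)
        calc ((s:ℝ) + k) * m ≤ (4 * s) * (L * k) := le_trans t1 t2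
          _ = 4 * s * L * k := by ring
      have he3 : Real.exp 1 ≤ 3 := by
        have := Real.exp_one_lt_d9
        linarith
      have hLQ : L ≤ Q := by
        have := Real.log_le_sub_one_of_pos hQpos
        rw [← hL] at this
        linarith
      have hsQ : (s:ℝ)/m ≤ Q := by rw [hQ]; linarith
      have hexp1pos : (0:ℝ) < Real.exp 1 := Real.exp_pos 1
      calc ((s:ℝ) + k) * Real.exp 1 / k = (((s:ℝ) + k) / k) * Real.exp 1 := by ring
        _ ≤ (4 * s * L / m) * 3 := by
            refine mul_le_mul hinvk he3 hexp1pos.le ?_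
            positivity
        _ = 12 * ((s:ℝ)/m) * L := by ring
        _ ≤ 12 * Q * Q := by
            have e1 : ((s:ℝ)/m) * L ≤ Q * L := mul_le_mul_of_nonneg_right hsQ hLpos.le
            have e2 : Q * L ≤ Q * Q := mul_le_mul_of_nonneg_left hLQ hQpos.le
            linarith
        _ ≤ Q ^ 6 := by
            have h16 : (16:ℝ) ≤ Q ^ 4 := by
              calc (16:ℝ) = 2 ^ 4 := by norm_num
                _ ≤ Q ^ 4 := pow_le_pow_left₀ (by norm_num) hQ2 4
            have hsq : (0:ℝ) ≤ Q ^ 2 := sq_nonneg Q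
            calc 12 * Q * Q = 12 * Q ^ 2 := by ring
              _ ≤ 16 * Q ^ 2 := by linarith
              _ ≤ Q ^ 4 * Q ^ 2 := mul_le_mul_of_nonneg_right h16 hsq
              _ = Q ^ 6 := by ring
    have hNexp : (N:ℝ) ≤ Real.exp (12 * m) := by
      have hQ6k : ((s:ℝ) + k) * Real.exp 1 / k ≥ 0 := by positivity
      have h1 : (N:ℝ) ≤ (Q ^ 6) ^ k := by
        calc (N:ℝ) ≤ ((s:ℝ) + k) ^ k / (Nat.factorial k : ℝ) := le_trans hNchoose hchoose_pow
          _ ≤ (((s:ℝ) + k) * Real.exp 1 / k) ^ k := hfact_inv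
          _ ≤ (Q ^ 6) ^ k := pow_le_pow_left₀ hQ6k hbase k
      have h2 : (Q ^ 6 : ℝ) ^ k = Real.exp (6 * k * L) := by
        rw [← Real.exp_log hQpos, ← hL, ← Real.exp_nat_mul, ← Real.exp_nat_mul]
        ring_nf
      rw [h2] at h1
      refine h1.trans (Real.exp_le_exp.2 ?_)
      nlinarith
    -- conclude
    have hrle : r ≤ Real.sqrt (L/(m:ℝ)) := by
      rw [hr, show L/(m:ℝ) = ((m:ℝ)/L)⁻¹ by rw [inv_div], Real.sqrt_inv]
      exact inv_anti₀ (Real.sqrt_pos.2 hmLpos) (Real.sqrt_le_sqrt hk_low)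
    have hmain : R ^ ((1:ℝ)/(m:ℝ)) ≤ Real.exp 12 * r := by
      have hstep1 : R ^ ((1:ℝ)/(m:ℝ)) ≤ ((N:ℝ) * r ^ m) ^ ((1:ℝ)/(m:ℝ)) :=
        Real.rpow_le_rpow hR0 hRN (by positivity)
      have hstep2 : ((N:ℝ) * r ^ m) ^ ((1:ℝ)/(m:ℝ))
          = (N:ℝ) ^ ((1:ℝ)/(m:ℝ)) * r := by
        rw [Real.mul_rpow hN0 (by positivity)]
        congr 1
        rw [← Real.rpow_natCast r m, ← Real.rpow_mul hrpos.le]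
        rw [mul_one_div, div_self (by positivity : (m:ℝ) ≠ 0), Real.rpow_one]
      have hstep3 : (N:ℝ) ^ ((1:ℝ)/(m:ℝ)) ≤ Real.exp 12 := by
        calc (N:ℝ) ^ ((1:ℝ)/(m:ℝ)) ≤ (Real.exp (12 * m)) ^ ((1:ℝ)/(m:ℝ)) :=
              Real.rpow_le_rpow hN0 hNexp (by positivity)
          _ = Real.exp 12 := by
              rw [← Real.exp_mul]
              congr 1
              field_simp
      calc R ^ ((1:ℝ)/(m:ℝ)) ≤ (N:ℝ) ^ ((1:ℝ)/(m:ℝ)) * r := by rw [← hstep2]; exact hstep1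
        _ ≤ Real.exp 12 * r := mul_le_mul_of_nonneg_right hstep3 hrpos.le
    calc R ^ ((1:ℝ)/(m:ℝ)) ≤ Real.exp 12 * r := hmain
      _ ≤ Real.exp 12 * Real.sqrt (L/(m:ℝ)) :=
          mul_le_mul_of_nonneg_left hrle (by positivity)


private lemma bf_image_volume {m : ℕ} (T : En m →ᵃ[ℝ] En m) (A : Set (En m)) :
    volume (T '' A) = ENNReal.ofReal |LinearMap.det T.linear| * volume A := by
  have hdecomp : T '' A = (fun y : En m => T 0 + y) '' (T.linear '' A) := by
    rw [Set.image_image]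
    apply Set.image_congr
    intro a _
    conv_lhs => rw [AffineMap.decomp T]
    simp [add_comm]
  rw [hdecomp]
  have himg : (fun y : En m => T 0 + y) '' (T.linear '' A) = (T 0) +ᵥ (T.linear '' A) := by
    rw [← Set.image_vadd]
    rfl
  rw [himg, measure_vadd, Measure.addHaar_image_linearMap]


/-- The Bárány–Füredi theorem (ellipsoid form): there is an absolute constant C > 0 such
that if E is an ellipsoid in ℝ^m (image of the unit ball under an invertible affine map),
s ≥ m+1, and w₁,…,w_s ∈ E, then (|conv(w₁,…,w_s)|/|E|)^{1/m} ≤ C √(log(1+s/m)/m). -/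
theorem barany_furedi :
    ∃ C : ℝ, 0 < C ∧
      ∀ (m s : ℕ), 1 ≤ m → m + 1 ≤ s →
        ∀ T : En m ≃ᵃ[ℝ] En m, ∀ w : Fin s → En m,
          (∀ i, w i ∈ T '' closedBall (0 : En m) 1) →
          ((volume (convexHull ℝ (Set.range w))).toReal /
              (volume (T '' closedBall (0 : En m) 1)).toReal) ^ ((1:ℝ)/(m:ℝ))
            ≤ C * Real.sqrt (Real.log (1 + (s:ℝ)/(m:ℝ)) / (m:ℝ)) := by
  refine ⟨Real.exp 12, Real.exp_pos 12, ?_⟩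
  intro m s hm hs T w hw
  set u : Fin s → En m := fun i => T.symm (w i) with hu
  have hmem : ∀ i, u i ∈ closedBall (0 : En m) 1 := by
    intro i
    obtain ⟨y, hy, hTy⟩ := hw i
    have : u i = y := by rw [hu]; simp [← hTy]
    rwa [this]
  have hnorm : ∀ i, ‖u i‖ ≤ 1 := fun i => mem_closedBall_zero_iff.1 (hmem i)
  have hwu : w = fun i => T.toAffineMap (u i) := by
    funext i
    simp [hu]
  have hrange : Set.range w = T.toAffineMap '' Set.range u := by
    rw [hwu, ← Set.range_comp]
    rfl
  have hhull : convexHull ℝ (Set.range w) = T.toAffineMap '' convexHull ℝ (Set.range u) := by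
    rw [hrange, AffineMap.image_convexHull]
  have himgT : T '' closedBall (0 : En m) 1 = T.toAffineMap '' closedBall (0 : En m) 1 := rfl
  set d : ℝ := |LinearMap.det T.toAffineMap.linear| with hd
  have hdet : LinearMap.det T.toAffineMap.linear ≠ 0 := by
    have : T.toAffineMap.linear = (T.linear : En m →ₗ[ℝ] En m) := rfl
    rw [this]
    exact (LinearEquiv.isUnit_det' T.linear).ne_zero
  have hdpos : 0 < d := abs_pos.2 hdet
  have hv1 : volume (convexHull ℝ (Set.range w))
      = ENNReal.ofReal d * volume (convexHull ℝ (Set.range u)) := by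
    rw [hhull, bf_image_volume]
  have hv2 : volume (T '' closedBall (0 : En m) 1)
      = ENNReal.ofReal d * volume (closedBall (0 : En m) 1) := by
    rw [himgT, bf_image_volume]
  rw [hv1, hv2, ENNReal.toReal_mul, ENNReal.toReal_mul,
    ENNReal.toReal_ofReal hdpos.le,
    mul_div_mul_left _ _ hdpos.ne']
  exact bf_ball_case hm hs u hnorm


end
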